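/- Fix an integer k ≥ 1. There exists a constant c = c(k) > 0 such that the following holds. Let p be a prime, a_0, a_1, …, a_k ∈ F_p^*, and 1 ≤ t_1 < … < t_k < p integers, and suppose the polynomial F(X) = a_0 + a_1·X^{t_1} + … + a_k·X^{t_k} ∈ F_p[X] splits completely over F_p. Then, setting t_0 = 0 and D = min over i ∈ {0,…,k} of (max over j ≠ i of gcd(t_j − t_i, p−1)), one has D ≥ c · t_k^{k} · p^{−(k−1)}. -/

import Mathlib

set_option linter.unusedSectionVars false
set_option maxHeartbeats 1600000

open Polynomial Finset

namespace CFK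


variable {p : ℕ} [hp : Fact p.Prime]

lemma pow_pm1 (x : (ZMod p)ˣ) : x ^ (p - 1) = 1 := by
  rw [← ZMod.card_units p]; exact pow_card_eq_one

lemma pow_eq_one_iff_gcd (x : (ZMod p)ˣ) (t : ℕ) :
    x ^ t = 1 ↔ x ^ Nat.gcd t (p - 1) = 1 := by
  constructor
  · intro h
    have hz : (x : (ZMod p)ˣ) ^ ((Nat.gcd t (p - 1) : ℤ)) = 1 := by
      rw [Nat.gcd_eq_gcd_ab t (p - 1)]
      rw [zpow_add, zpow_mul, zpow_mul]
      norm_cast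
      rw [h, pow_pm1, one_zpow, one_zpow, one_mul]
    exact_mod_cast (zpow_natCast x (Nat.gcd t (p-1))) ▸ hz
  · intro h
    obtain ⟨q, hq⟩ := Nat.gcd_dvd_left t (p - 1)
    rw [hq, pow_mul, h, one_pow]

lemma card_pow_eq_one_le (g : ℕ) (hg : 0 < g) :
    (univ.filter fun x : (ZMod p)ˣ => x ^ g = 1).card ≤ g := by
  classical
  have hdeg : ((X : (ZMod p)[X]) ^ g - 1).natDegree = g := by
    have h1 : ((X:(ZMod p)[X])^g - 1) = X^g - C 1 := by simp
    rw [h1, natDegree_X_pow_sub_C]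
  have hpoly : ((X : (ZMod p)[X]) ^ g - 1) ≠ 0 := by
    intro h
    have := congrArg (fun q => Polynomial.natDegree q) h
    simp only [h, natDegree_zero] at hdeg
    omega
  have hinj : Set.InjOn (fun x : (ZMod p)ˣ => (x : ZMod p))
      ↑(univ.filter fun x : (ZMod p)ˣ => x ^ g = 1) := by
    intro a _ b _ hab; exact Units.ext hab
  have hmaps : ∀ x ∈ (univ.filter fun x : (ZMod p)ˣ => x ^ g = 1),
      (x : ZMod p) ∈ (((X : (ZMod p)[X]) ^ g - 1).roots.toFinset) := by
    intro x hx
    simp only [mem_filter] at hx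
    rw [Multiset.mem_toFinset, mem_roots hpoly]
    simp only [IsRoot, eval_sub, eval_pow, eval_X, eval_one]
    have : ((x : ZMod p)) ^ g = ((x ^ g : (ZMod p)ˣ) : ZMod p) := by push_cast; ring
    rw [this, hx.2]; simp
  calc (univ.filter fun x : (ZMod p)ˣ => x ^ g = 1).card
      ≤ (((X : (ZMod p)[X]) ^ g - 1).roots.toFinset).card :=
        Finset.card_le_card_of_injOn _ hmaps hinj
    _ ≤ Multiset.card (((X : (ZMod p)[X]) ^ g - 1).roots) := Multiset.toFinset_card_le _
    _ ≤ ((X : (ZMod p)[X]) ^ g - 1).natDegree := Polynomial.card_roots' _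
    _ = g := hdeg

lemma card_pow_fiber_le (t : ℕ) (c : (ZMod p)ˣ) :
    (univ.filter fun x : (ZMod p)ˣ => x ^ t = c).card ≤ Nat.gcd t (p - 1) := by
  classical
  have hn : 0 < p - 1 := by have := hp.out.two_le; omega
  have hg : 0 < Nat.gcd t (p - 1) := Nat.gcd_pos_of_pos_right _ hn
  rcases (univ.filter fun x : (ZMod p)ˣ => x ^ t = c).eq_empty_or_nonempty with h | ⟨x₀, hx₀⟩
  · rw [h]; simpa using Nat.zero_le _
  · simp only [mem_filter] at hx₀
    have : (univ.filter fun x : (ZMod p)ˣ => x ^ t = c).card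
        ≤ (univ.filter fun y : (ZMod p)ˣ => y ^ Nat.gcd t (p-1) = 1).card := by
      apply Finset.card_le_card_of_injOn (fun x => x * x₀⁻¹)
      · intro x hx
        simp only [Finset.mem_coe, mem_filter, mem_univ, true_and] at hx ⊢
        rw [← pow_eq_one_iff_gcd]
        rw [mul_pow, hx, inv_pow, hx₀.2]
        simp
      · intro a _ b _ hab
        exact mul_right_cancel hab
    exact this.trans (card_pow_eq_one_le _ hg)



section LinAlg

variable {F : Type*} [Field F] {ι : Type*} [Fintype ι] [DecidableEq ι]

/-- dot product of two vectors -/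
def dotv (w u : ι → F) : F := ∑ i, w i * u i

lemma dotv_comm (w u : ι → F) : dotv w u = dotv u w := by
  simp [dotv, mul_comm]

/-- dot product as linear map in the first argument -/
def dotL (u : ι → F) : (ι → F) →ₗ[F] F where
  toFun w := dotv w u
  map_add' w w' := by simp [dotv, add_mul, Finset.sum_add_distrib]
  map_smul' c w := by
    simp only [dotv, RingHom.id_apply, Finset.mul_sum, Pi.smul_apply, smul_eq_mul]
    exact Finset.sum_congr rfl fun i _ => by ring

lemma dotv_single_left (i : ι) (u : ι → F) : dotv (Pi.single i 1) u = u i := by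
  simp only [dotv]
  rw [Finset.sum_eq_single i]
  · simp
  · intro b _ hb; simp [Pi.single_apply, hb]
  · intro h; exact absurd (Finset.mem_univ i) h

lemma dotv_sub_right (w u u' : ι → F) :
    dotv w (fun j => u j - u' j) = dotv w u - dotv w u' := by
  simp [dotv, mul_sub, Finset.sum_sub_distrib]

lemma dotv_smul_right (w : ι → F) (c : F) (u : ι → F) :
    dotv w (c • u) = c * dotv w u := by
  simp only [dotv, Finset.mul_sum, Pi.smul_apply, smul_eq_mul]
  exact Finset.sum_congr rfl fun i _ => by ring

lemma dotv_eq_zero_of_mem_span {κ : Type*} (f : κ → (ι → F)) (u : ι → F)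
    (h : ∀ i, dotv (f i) u = 0) {w : ι → F}
    (hw : w ∈ Submodule.span F (Set.range f)) : dotv w u = 0 := by
  have hle : Submodule.span F (Set.range f) ≤ LinearMap.ker (dotL u) := by
    rw [Submodule.span_le]
    rintro _ ⟨i, rfl⟩
    exact h i
  exact hle hw

lemma eq_zero_of_dot_perp {m : ℕ} (f : Fin m → (ι → F)) (hLI : LinearIndependent F f)
    (hcard : m + 1 = Fintype.card ι) (i₀ : ι)
    (Xv : ι → F) (hX : ∀ r, dotv (f r) Xv = 0) (hXi : Xv i₀ ≠ 0)
    (u : ι → F) (hu : ∀ r, dotv (f r) u = 0) (hui : u i₀ = 0) : u = 0 := by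
  by_cases hmem : Pi.single i₀ (1:F) ∈ Submodule.span F (Set.range f)
  · exact absurd (dotv_eq_zero_of_mem_span f Xv hX hmem)
      (by rwa [dotv_single_left])
  · have hLI2 : LinearIndependent F (Fin.snoc f (Pi.single i₀ (1:F)) : Fin (m+1) → (ι → F)) :=
      linearIndependent_fin_snoc.2 ⟨hLI, hmem⟩
    have hcard2 : Fintype.card (Fin (m+1)) = Module.finrank F (ι → F) := by
      rw [Module.finrank_fintype_fun_eq_card, Fintype.card_fin, hcard]
    have hspan : Submodule.span F
        (Set.range (Fin.snoc f (Pi.single i₀ (1:F)) : Fin (m+1) → (ι → F))) = ⊤ := by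
      have h := (basisOfLinearIndependentOfCardEqFinrank hLI2 hcard2).span_eq
      rwa [coe_basisOfLinearIndependentOfCardEqFinrank hLI2 hcard2] at h
    funext j
    have hj : Pi.single j (1:F) ∈
        Submodule.span F (Set.range (Fin.snoc f (Pi.single i₀ (1:F)) : Fin (m+1) → (ι → F))) := by
      rw [hspan]; trivial
    have hz := dotv_eq_zero_of_mem_span
      (Fin.snoc f (Pi.single i₀ (1:F)) : Fin (m+1) → (ι → F)) u ?_ hj
    · rw [dotv_single_left] at hz
      simpa using hz
    · intro i
      refine Fin.lastCases ?_ ?_ i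
      · rw [Fin.snoc_last, dotv_single_left, hui]
      · intro r; rw [Fin.snoc_castSucc]; exact hu r

lemma exists_perp_covector {m : ℕ} (f : Fin m → (ι → F)) (hm : m + 2 ≤ Fintype.card ι)
    (i₀ : ι) (Xv : ι → F) (hX : ∀ r, dotv (f r) Xv = 0) (hXi : Xv i₀ ≠ 0) :
    ∃ e : ι → F, (∀ r, dotv (f r) e = 0) ∧ e i₀ = 1 ∧ ∃ j, j ≠ i₀ ∧ e j = 0 := by
  by_contra hcon
  push_neg at hcon
  set L : (ι → F) →ₗ[F] (Fin m → F) := LinearMap.pi (fun r => dotL (f r)) with hL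
  have hLmem : ∀ a : ι → F, a ∈ LinearMap.ker L ↔ ∀ r, dotv (f r) a = 0 := by
    intro a
    rw [LinearMap.mem_ker]
    constructor
    · intro ha r
      have h2 := congrFun ha r
      simp only [hL, LinearMap.pi_apply, Pi.zero_apply] at h2
      rw [dotv_comm]
      exact h2
    · intro ha
      funext r
      simp only [hL, LinearMap.pi_apply, Pi.zero_apply]
      show dotv a (f r) = 0
      rw [dotv_comm]
      exact ha r
  have hker2 : 2 ≤ Module.finrank F (LinearMap.ker L) := by
    have h1 := LinearMap.finrank_range_add_finrank_ker L
    have h2 : Module.finrank F (LinearMap.range L) ≤ m := by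
      have := Submodule.finrank_le (LinearMap.range L)
      rwa [Module.finrank_fintype_fun_eq_card, Fintype.card_fin] at this
    rw [Module.finrank_fintype_fun_eq_card] at h1
    omega
  have hstar : ∀ a, a ∈ LinearMap.ker L → a i₀ ≠ 0 → ∀ j, a j ≠ 0 := by
    intro a ha hai j
    by_cases hj : j = i₀
    · rwa [hj]
    · set e := (a i₀)⁻¹ • a with he
      have h1 : ∀ r, dotv (f r) e = 0 := by
        intro r
        rw [he, dotv_smul_right, (hLmem a).1 ha r, mul_zero]
      have h2 : e i₀ = 1 := by
        simp [he, inv_mul_cancel₀ hai]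
      have := hcon e h1 h2 j hj
      intro haj
      exact this (by simp [he, haj])
  have hsub : LinearMap.ker L ≤ Submodule.span F {Xv} := by
    intro a ha
    have hXker : Xv ∈ LinearMap.ker L := (hLmem Xv).2 hX
    have key : ∀ j, a j * Xv i₀ = a i₀ * Xv j := by
      intro j
      by_cases hj : j = i₀
      · rw [hj]
      · set b := fun t => Xv j * a t - a j * Xv t with hbdef
        have hb : b ∈ LinearMap.ker L := by
          rw [hLmem]
          intro r
          have : b = fun t => (Xv j • a) t - (a j • Xv) t := by
            funext t; simp [hbdef, smul_eq_mul]
          rw [this, dotv_sub_right, dotv_smul_right, dotv_smul_right,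
            (hLmem a).1 ha r, hX r]
          ring
        have hbj : b j = 0 := by simp only [hbdef]; ring
        have hbi : b i₀ = 0 := by
          by_contra hbi
          exact (hstar b hb hbi j) hbj
        have h5 : Xv j * a i₀ - a j * Xv i₀ = 0 := hbi
        linear_combination -h5
    have ha2 : a = (a i₀ / Xv i₀) • Xv := by
      funext j
      have h6 := key j
      show a j = (a i₀ / Xv i₀) * Xv j
      field_simp
      linear_combination h6
    rw [ha2]
    exact Submodule.smul_mem _ _ (Submodule.mem_span_singleton_self _)
  have hXne : Xv ≠ 0 := fun h => hXi (by rw [h]; rfl)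
  have : Module.finrank F (LinearMap.ker L) ≤ 1 := by
    calc Module.finrank F (LinearMap.ker L)
        ≤ Module.finrank F (Submodule.span F {Xv}) := Submodule.finrank_mono hsub
      _ = 1 := finrank_span_singleton hXne
  omega

lemma exists_mem_span_of_not_li {V : Type*} [AddCommGroup V] [Module F V] :
    ∀ {m : ℕ} (f : Fin m → V), ¬ LinearIndependent F f →
    ∃ i : Fin m, f i ∈ Submodule.span F (f '' {j | j < i}) := by
  intro m
  induction m with
  | zero => intro f hf; exact absurd linearIndependent_empty_type hf
  | succ m ih =>
    intro f hf
    by_cases hLI : LinearIndependent F (Fin.init f)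
    · refine ⟨Fin.last m, ?_⟩
      have hsnoc : ¬ LinearIndependent F (Fin.snoc (Fin.init f) (f (Fin.last m)) : Fin (m+1) → V) := by
        rwa [Fin.snoc_init_self]
      rw [linearIndependent_fin_snoc] at hsnoc
      push_neg at hsnoc
      have hmem := hsnoc hLI
      have himg : Set.range (Fin.init f) = f '' {j | j < Fin.last m} := by
        ext v
        constructor
        · rintro ⟨r, rfl⟩
          exact ⟨r.castSucc, Fin.castSucc_lt_last r, rfl⟩
        · rintro ⟨j, hj, rfl⟩
          have hjm : j.1 < m := by
            have h7 := Fin.lt_iff_val_lt_val.1 hj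
            simpa using h7
          refine ⟨⟨j.1, hjm⟩, ?_⟩
          show f (Fin.castSucc ⟨j.1, hjm⟩) = f j
          have h8 : Fin.castSucc ⟨j.1, hjm⟩ = j := Fin.ext rfl
          rw [h8]
      rwa [himg] at hmem
    · obtain ⟨i, hi⟩ := ih _ hLI
      refine ⟨i.castSucc, ?_⟩
      have h1 : Fin.init f i = f i.castSucc := rfl
      have himg : Fin.init f '' {j | j < i} = f '' {j | j < i.castSucc} := by
        ext v
        constructor
        · rintro ⟨j, hj, rfl⟩
          exact ⟨j.castSucc, by simpa [Fin.castSucc_lt_castSucc_iff] using hj, rfl⟩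
        · rintro ⟨j, hj, rfl⟩
          have h2 : j.1 < i.castSucc.1 := Fin.lt_iff_val_lt_val.1 hj
          have h3 : i.castSucc.1 = i.1 := rfl
          have hii : i.1 < m := i.2
          have hjm : j.1 < m := by omega
          refine ⟨⟨j.1, hjm⟩, ?_, ?_⟩
          · simp only [Set.mem_setOf_eq]
            rw [Fin.lt_iff_val_lt_val]
            show j.1 < i.1
            omega
          · show f (Fin.castSucc ⟨j.1, hjm⟩) = f j
            have h8 : Fin.castSucc ⟨j.1, hjm⟩ = j := Fin.ext rfl
            rw [h8]
      rw [himg] at hi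
      exact hi

end LinAlg



section Rec

variable {p : ℕ} [hp : Fact p.Prime]
variable {ι₀ : Type*} [Fintype ι₀] [DecidableEq ι₀]

def rootsOf (c : ι₀ → ZMod p) (σ : ι₀ → ℕ) : Finset (ZMod p)ˣ :=
  univ.filter fun x => (∑ j, c j * (x : ZMod p) ^ σ j) = 0

lemma mem_rootsOf {c : ι₀ → ZMod p} {σ : ι₀ → ℕ} {x : (ZMod p)ˣ} :
    x ∈ rootsOf c σ ↔ (∑ j, c j * (x : ZMod p) ^ σ j) = 0 := by
  simp [rootsOf]

def suppc (i0 : ι₀) (c : ι₀ → ZMod p) : Finset ι₀ :=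
  univ.filter fun j => j ≠ i0 ∧ c j ≠ 0

lemma not_mem_suppc_iff {i0 j : ι₀} {c : ι₀ → ZMod p} :
    j ∉ suppc i0 c ↔ (j = i0 ∨ c j = 0) := by
  simp only [suppc, Finset.mem_filter, Finset.mem_univ, true_and]
  tauto

lemma i0_not_mem_suppc (i0 : ι₀) (c : ι₀ → ZMod p) : i0 ∉ suppc i0 c := by
  simp [suppc]

lemma rootsOf_card_le (c : ι₀ → ZMod p) (σ : ι₀ → ℕ) : (rootsOf c σ).card ≤ p - 1 := by
  calc (rootsOf c σ).card ≤ (univ : Finset (ZMod p)ˣ).card :=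
        Finset.card_le_card (Finset.filter_subset _ _)
    _ = p - 1 := by rw [Finset.card_univ, ZMod.card_units]

lemma rootsOf_empty (c : ι₀ → ZMod p) (σ : ι₀ → ℕ) (i0 : ι₀) (hσ0 : σ i0 = 0)
    (hc0 : c i0 ≠ 0) (h : suppc i0 c = ∅) : rootsOf c σ = ∅ := by
  ext x
  simp only [mem_rootsOf, Finset.notMem_empty, iff_false]
  intro hsum
  rw [Finset.sum_eq_single i0] at hsum
  · rw [hσ0, pow_zero, mul_one] at hsum; exact hc0 hsum
  · intro b _ hb
    have hb2 : b ∉ suppc i0 c := by rw [h]; exact Finset.notMem_empty b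
    rcases not_mem_suppc_iff.1 hb2 with h' | h'
    · exact absurd h' hb
    · rw [h', zero_mul]
  · intro h'; exact absurd (mem_univ i0) h'

def vvec (c : ι₀ → ZMod p) (σ : ι₀ → ℕ) (i0 : ι₀) (z : (ZMod p)ˣ) :
    Option ↥(suppc i0 c) → ZMod p :=
  fun j => Option.casesOn j 1 (fun j' => (z : ZMod p) ^ σ j'.1)

def Xvec (c : ι₀ → ZMod p) (σ : ι₀ → ℕ) (i0 : ι₀) (x : (ZMod p)ˣ) :
    Option ↥(suppc i0 c) → ZMod p :=
  fun j => Option.casesOn j (c i0) (fun j' => c j'.1 * (x : ZMod p) ^ σ j'.1)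

lemma vvec_none (c : ι₀ → ZMod p) (σ : ι₀ → ℕ) (i0 : ι₀) (z : (ZMod p)ˣ) :
    vvec c σ i0 z none = 1 := rfl

lemma vvec_ne_zero (c : ι₀ → ZMod p) (σ : ι₀ → ℕ) (i0 : ι₀) (z : (ZMod p)ˣ) :
    vvec c σ i0 z ≠ 0 := by
  intro h
  have := congrFun h none
  rw [vvec_none] at this
  simp at this

lemma dot_vvec (c : ι₀ → ZMod p) (σ : ι₀ → ℕ) (i0 : ι₀) (hσ0 : σ i0 = 0)
    (z : (ZMod p)ˣ) (c' : ι₀ → ZMod p) (w : Option ↥(suppc i0 c) → ZMod p)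
    (hnone : w none = c' i0)
    (hsome : ∀ j' : ↥(suppc i0 c), w (some j') = c' j'.1)
    (hout : ∀ j, j ∉ suppc i0 c → j ≠ i0 → c' j = 0) :
    dotv (vvec c σ i0 z) w = ∑ j, c' j * (z : ZMod p) ^ σ j := by
  classical
  rw [dotv, Fintype.sum_option]
  have hL1 : vvec c σ i0 z none * w none = c' i0 := by
    rw [vvec_none, hnone, one_mul]
  have hL2 : (∑ j' : ↥(suppc i0 c), vvec c σ i0 z (some j') * w (some j'))
      = ∑ j ∈ suppc i0 c, c' j * (z : ZMod p) ^ σ j := by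
    rw [Finset.univ_eq_attach]
    rw [← Finset.sum_attach (suppc i0 c) (fun j => c' j * (z : ZMod p) ^ σ j)]
    apply Finset.sum_congr rfl
    intro j' _
    rw [hsome j']
    show (z : ZMod p) ^ σ j'.1 * c' j'.1 = c' j'.1 * (z : ZMod p) ^ σ j'.1
    ring
  rw [hL1, hL2]
  have hR : (∑ j, c' j * (z : ZMod p) ^ σ j)
      = ∑ j ∈ insert i0 (suppc i0 c), c' j * (z : ZMod p) ^ σ j := by
    symm
    apply Finset.sum_subset (Finset.subset_univ _)
    intro j _ hj
    have hj1 : j ∉ suppc i0 c := fun h => hj (Finset.mem_insert_of_mem h)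
    have hj2 : j ≠ i0 := fun h => hj (h ▸ Finset.mem_insert_self _ _)
    rw [hout j hj1 hj2, zero_mul]
  rw [hR, Finset.sum_insert (i0_not_mem_suppc i0 c), hσ0, pow_zero, mul_one]

lemma dot_vvec_Xvec (c : ι₀ → ZMod p) (σ : ι₀ → ℕ) (i0 : ι₀) (hσ0 : σ i0 = 0)
    (z x : (ZMod p)ˣ) :
    dotv (vvec c σ i0 z) (Xvec c σ i0 x)
      = ∑ j, c j * ((x * z : (ZMod p)ˣ) : ZMod p) ^ σ j := by
  rw [dot_vvec c σ i0 hσ0 z (fun j => c j * (x : ZMod p) ^ σ j) (Xvec c σ i0 x)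
    (by show c i0 = c i0 * (x : ZMod p) ^ σ i0; rw [hσ0, pow_zero, mul_one])
    (fun j' => rfl)
    (fun j hj hji => by
      rcases not_mem_suppc_iff.1 hj with h | h
      · exact absurd h hji
      · show c j * (x : ZMod p) ^ σ j = 0
        rw [h, zero_mul])]
  apply Finset.sum_congr rfl
  intro j _
  rw [Units.val_mul, mul_pow]
  ring

lemma dot_vvec_Xvec_eq_zero (c : ι₀ → ZMod p) (σ : ι₀ → ℕ) (i0 : ι₀) (hσ0 : σ i0 = 0)
    {z x : (ZMod p)ˣ} (h : x * z ∈ rootsOf c σ) :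
    dotv (vvec c σ i0 z) (Xvec c σ i0 x) = 0 := by
  rw [dot_vvec_Xvec c σ i0 hσ0 z x]
  exact mem_rootsOf.1 h

lemma Xvec_none (c : ι₀ → ZMod p) (σ : ι₀ → ℕ) (i0 : ι₀) (x : (ZMod p)ˣ) :
    Xvec c σ i0 x none = c i0 := rfl

def rowFam (c : ι₀ → ZMod p) (σ : ι₀ → ℕ) (i0 : ι₀) {s : ℕ} (zv : Fin s → (ZMod p)ˣ) :
    Fin (s+1) → (Option ↥(suppc i0 c) → ZMod p) :=
  Fin.cons (vvec c σ i0 1) (fun r => vvec c σ i0 (zv r))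

lemma rowFam_perp (c : ι₀ → ZMod p) (σ : ι₀ → ℕ) (i0 : ι₀) (hσ0 : σ i0 = 0) {s : ℕ}
    (x : (ZMod p)ˣ) (zv : Fin s → (ZMod p)ˣ)
    (hx : x ∈ rootsOf c σ) (hxz : ∀ r, x * zv r ∈ rootsOf c σ) :
    ∀ j, dotv (rowFam c σ i0 zv j) (Xvec c σ i0 x) = 0 := by
  intro j
  refine Fin.cases ?_ ?_ j
  · have h0 : rowFam c σ i0 zv 0 = vvec c σ i0 1 := Fin.cons_zero _ _
    rw [h0]
    apply dot_vvec_Xvec_eq_zero c σ i0 hσ0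
    rwa [mul_one]
  · intro r
    have h0 : rowFam c σ i0 zv r.succ = vvec c σ i0 (zv r) := Fin.cons_succ _ _ _
    rw [h0]
    exact dot_vvec_Xvec_eq_zero c σ i0 hσ0 (hxz r)

def Wsp (c : ι₀ → ZMod p) (σ : ι₀ → ℕ) (i0 : ι₀) {s : ℕ} (zv : Fin s → (ZMod p)ˣ)
    (r0 : Fin s) : Submodule (ZMod p) (Option ↥(suppc i0 c) → ZMod p) :=
  Submodule.span (ZMod p)
    (Set.range fun i : Fin (r0.1+1) =>
      rowFam c σ i0 zv (Fin.castLE (Nat.succ_le_succ r0.2.le) i))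

lemma exists_subinst (c : ι₀ → ZMod p) (σ : ι₀ → ℕ) (i0 : ι₀) (hσ0 : σ i0 = 0)
    (hc0 : c i0 ≠ 0) {s : ℕ} (hcard' : (suppc i0 c).card = s + 1)
    (x : (ZMod p)ˣ) (zv : Fin s → (ZMod p)ˣ)
    (hx : x ∈ rootsOf c σ) (hxz : ∀ r, x * zv r ∈ rootsOf c σ) (r0 : Fin s) :
    ∃ c' : ι₀ → ZMod p, c' i0 ≠ 0 ∧ (suppc i0 c').card ≤ s ∧
      suppc i0 c' ⊆ suppc i0 c ∧ σ i0 = 0 ∧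
      ∀ z : (ZMod p)ˣ, vvec c σ i0 z ∈ Wsp c σ i0 zv r0 → z ∈ rootsOf c' σ := by
  classical
  have cardι : Fintype.card (Option ↥(suppc i0 c)) = s + 2 := by
    rw [Fintype.card_option, Fintype.card_coe, hcard']
  set f : Fin (r0.1+1) → (Option ↥(suppc i0 c) → ZMod p) :=
    fun i => rowFam c σ i0 zv (Fin.castLE (Nat.succ_le_succ r0.2.le) i) with hf
  have hm : (r0.1+1) + 2 ≤ Fintype.card (Option ↥(suppc i0 c)) := by
    rw [cardι]
    have := r0.2
    omega
  have hX : ∀ i, dotv (f i) (Xvec c σ i0 x) = 0 := fun i =>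
    rowFam_perp c σ i0 hσ0 x zv hx hxz _
  obtain ⟨e, he1, he2, jj, hjj, hjj0⟩ :=
    exists_perp_covector f hm none (Xvec c σ i0 x) hX
      (by rw [Xvec_none]; exact hc0)
  obtain ⟨jb, rfl⟩ : ∃ y, jj = some y := by
    cases jj with
    | none => exact absurd rfl hjj
    | some y => exact ⟨y, rfl⟩
  set c' : ι₀ → ZMod p :=
    fun j => if h : j ∈ suppc i0 c then e (some ⟨j, h⟩) else if j = i0 then 1 else 0 with hc'
  have hc'i0 : c' i0 = 1 := by
    simp only [hc']
    rw [dif_neg (i0_not_mem_suppc i0 c)]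
    simp
  have hc'sub : suppc i0 c' ⊆ suppc i0 c := by
    intro j hj
    simp only [suppc, Finset.mem_filter, Finset.mem_univ, true_and] at hj
    by_contra hns
    have : c' j = 0 := by
      simp only [hc']
      rw [dif_neg hns, if_neg hj.1]
    exact hj.2 this
  refine ⟨c', by rw [hc'i0]; exact one_ne_zero, ?_, hc'sub, hσ0, ?_⟩
  · -- card bound
    have hsub2 : suppc i0 c' ⊆ (suppc i0 c).erase jb.1 := by
      intro j hj
      rw [Finset.mem_erase]
      refine ⟨?_, hc'sub hj⟩
      intro hjeq
      have hjs : j ∈ suppc i0 c := hc'sub hj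
      have : c' j = 0 := by
        simp only [hc']
        rw [dif_pos hjs]
        have : (⟨j, hjs⟩ : ↥(suppc i0 c)) = jb := by
          apply Subtype.ext
          exact hjeq
        rw [this, hjj0]
      simp only [suppc, Finset.mem_filter] at hj
      exact hj.2.2 this
    calc (suppc i0 c').card ≤ ((suppc i0 c).erase jb.1).card := Finset.card_le_card hsub2
      _ = (suppc i0 c).card - 1 := Finset.card_erase_of_mem jb.2
      _ = s := by rw [hcard']; omega
  · -- roots
    intro z hz
    have hdot : dotv (vvec c σ i0 z) e = 0 :=
      dotv_eq_zero_of_mem_span f e he1 hz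
    rw [mem_rootsOf]
    rw [← dot_vvec c σ i0 hσ0 z c' e ?_ ?_ ?_]
    · exact hdot
    · rw [he2, hc'i0]
    · intro j'
      simp only [hc']
      rw [dif_pos j'.2]
    · intro j hj hji
      simp only [hc']
      rw [dif_neg hj, if_neg hji]

def Bc : ℕ → ℕ
  | 0 => 2
  | (s+1) => (2*(s+1))^(s+1) * Bc s + 2

lemma two_le_Bc (s : ℕ) : 2 ≤ Bc s := by
  cases s with
  | zero => simp [Bc]
  | succ s => show 2 ≤ (2*(s+1))^(s+1) * Bc s + 2; omega

lemma Bc_le_succ (s : ℕ) : Bc s ≤ Bc (s+1) := by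
  show Bc s ≤ (2*(s+1))^(s+1) * Bc s + 2
  have h1 : 1 ≤ (2*(s+1))^(s+1) := Nat.one_le_pow _ _ (by omega)
  calc Bc s = 1 * Bc s := (one_mul _).symm
    _ ≤ (2*(s+1))^(s+1) * Bc s := Nat.mul_le_mul_right _ h1
    _ ≤ _ := Nat.le_add_right _ _

theorem rec_bound (E : ℕ) (hE : 1 ≤ E) :
    ∀ (s : ℕ) (c : ι₀ → ZMod p) (σ : ι₀ → ℕ) (i0 : ι₀),
      σ i0 = 0 → c i0 ≠ 0 → (∀ j ∈ suppc i0 c, Nat.gcd (σ j) (p - 1) ≤ E) →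
      (suppc i0 c).card ≤ s →
      (rootsOf c σ).card ^ s ≤ Bc s * E * (p - 1) ^ (s - 1) := by
  intro s
  induction s with
  | zero =>
    intro c σ i0 hσ0 hc0 hgcd hcard
    have : Bc 0 * E * (p-1)^(0-1) = 2 * E := by norm_num [Bc]
    rw [this, pow_zero]
    omega
  | succ s ih =>
    intro c σ i0 hσ0 hc0 hgcd hcard
    classical
    by_cases hle : (suppc i0 c).card ≤ s
    · -- easy path
      rcases Nat.eq_zero_or_pos s with rfl | hs
      · have h0 : suppc i0 c = ∅ := Finset.card_eq_zero.1 (Nat.le_zero.1 hle)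
        rw [rootsOf_empty c σ i0 hσ0 hc0 h0]
        simp
      · have h1 := ih c σ i0 hσ0 hc0 hgcd hle
        have h2 : (rootsOf c σ).card ≤ p - 1 := rootsOf_card_le c σ
        calc (rootsOf c σ).card ^ (s+1)
            = (rootsOf c σ).card ^ s * (rootsOf c σ).card := by ring
          _ ≤ (Bc s * E * (p-1)^(s-1)) * (p-1) := Nat.mul_le_mul h1 h2
          _ = Bc s * E * ((p-1)^(s-1) * (p-1)) := by ring
          _ = Bc s * E * (p-1)^s := by
              congr 1
              rw [← pow_succ]
              congr 1
              omega
          _ ≤ Bc (s+1) * E * (p-1)^((s+1)-1) := by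
              simp only [Nat.add_sub_cancel]
              exact Nat.mul_le_mul_right _ (Nat.mul_le_mul_right _ (Bc_le_succ s))
    · -- main case
      have hcard' : (suppc i0 c).card = s + 1 := by omega
      set U := rootsOf c σ with hU
      set Q := U.card with hQdef
      have hQn : Q ≤ p - 1 := rootsOf_card_le c σ
      have cardι : Fintype.card (Option ↥(suppc i0 c)) = s + 2 := by
        rw [Fintype.card_option, Fintype.card_coe, hcard']
      set S : Finset ((ZMod p)ˣ × (Fin s → (ZMod p)ˣ)) :=
        univ.filter (fun t => t.1 ∈ U ∧ ∀ r, t.1 * t.2 r ∈ U) with hS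
      have hmemS : ∀ t : (ZMod p)ˣ × (Fin s → (ZMod p)ˣ),
          t ∈ S ↔ (t.1 ∈ U ∧ ∀ r, t.1 * t.2 r ∈ U) := by
        intro t; rw [hS]; simp
      -- lower bound on S
      have hSlow : Q ^ (s+1) ≤ S.card := by
        have hcardprod : (U ×ˢ (Fintype.piFinset fun _ : Fin s => U)).card = Q ^ (s+1) := by
          rw [Finset.card_product, Fintype.card_piFinset]
          simp only [Finset.prod_const, Finset.card_univ, Fintype.card_fin]
          rw [← hQdef]
          ring
        rw [← hcardprod]
        apply Finset.card_le_card_of_injOn (fun t => (t.1, fun r => t.1⁻¹ * t.2 r))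
        · rintro ⟨x, yv⟩ ht
          rw [Finset.mem_coe, Finset.mem_product] at ht
          rw [Finset.mem_coe, hmemS]
          refine ⟨ht.1, ?_⟩
          intro r
          show x * (x⁻¹ * yv r) ∈ U
          rw [mul_inv_cancel_left]
          exact Fintype.mem_piFinset.1 ht.2 r
        · rintro ⟨x, yv⟩ h1 ⟨x', yv'⟩ h2 heq
          have hx : x = x' := congrArg Prod.fst heq
          subst hx
          have h3 : (fun r => x⁻¹ * yv r) = (fun r => x⁻¹ * yv' r) := congrArg Prod.snd heq
          have h4 : yv = yv' := by
            funext r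
            have := congrFun h3 r
            exact mul_left_cancel this
          rw [h4]
      -- split
      have hsplit := Finset.card_filter_add_card_filter_not
        (s := S) (p := fun t => LinearIndependent (ZMod p) (rowFam c σ i0 t.2))
      obtain ⟨j₀, hj₀⟩ : (suppc i0 c).Nonempty := Finset.card_pos.1 (by omega)
      have hcj₀ : c j₀ ≠ 0 := by
        simp only [suppc, Finset.mem_filter] at hj₀
        exact hj₀.2.2
      -- nondegenerate count
      have hND : (S.filter (fun t => LinearIndependent (ZMod p) (rowFam c σ i0 t.2))).card
          ≤ (p-1)^s * E := by
        set SN := S.filter (fun t => LinearIndependent (ZMod p) (rowFam c σ i0 t.2)) with hSN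
        rw [Finset.card_eq_sum_card_fiberwise
          (f := Prod.snd) (t := (univ : Finset (Fin s → (ZMod p)ˣ)))
          (fun t _ => Finset.mem_univ _)]
        have hfib : ∀ zv : Fin s → (ZMod p)ˣ,
            (SN.filter fun t => t.2 = zv).card ≤ E := by
          intro zv
          rcases (SN.filter fun t => t.2 = zv).eq_empty_or_nonempty with he | hne
          · rw [he]; simp
          · obtain ⟨⟨x₁, zv₁⟩, h1⟩ := hne
            have h1' : (x₁, zv₁) ∈ SN ∧ zv₁ = zv := by
              have := Finset.mem_filter.1 h1
              exact ⟨this.1, this.2⟩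
            have hLI : LinearIndependent (ZMod p) (rowFam c σ i0 zv) := by
              have h2 : LinearIndependent (ZMod p) (rowFam c σ i0 zv₁) :=
                (Finset.mem_filter.1 h1'.1).2
              exact h1'.2 ▸ h2
            have hx₁S : (x₁, zv₁) ∈ S := (Finset.mem_filter.1 h1'.1).1
            -- pinning
            have hpin : ∀ t ∈ (SN.filter fun t => t.2 = zv),
                t.1 ^ σ j₀ = x₁ ^ σ j₀ := by
              intro t ht
              have htS : t ∈ S := (Finset.mem_filter.1 (Finset.mem_filter.1 ht).1).1
              have htzv : t.2 = zv := (Finset.mem_filter.1 ht).2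
              have htm := (hmemS t).1 htS
              have hx₁m := (hmemS (x₁, zv₁)).1 hx₁S
              set u : Option ↥(suppc i0 c) → ZMod p :=
                fun jj => Xvec c σ i0 t.1 jj - Xvec c σ i0 x₁ jj with hu
              have hperp_t : ∀ j, dotv (rowFam c σ i0 zv j) (Xvec c σ i0 t.1) = 0 := by
                apply rowFam_perp c σ i0 hσ0 t.1 zv htm.1
                intro r
                rw [← htzv]
                exact htm.2 r
              have hperp_x₁ : ∀ j, dotv (rowFam c σ i0 zv j) (Xvec c σ i0 x₁) = 0 := by
                apply rowFam_perp c σ i0 hσ0 x₁ zv hx₁m.1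
                intro r
                rw [← h1'.2]
                exact hx₁m.2 r
              have huzero : u = 0 := by
                apply eq_zero_of_dot_perp (rowFam c σ i0 zv) hLI
                  (by rw [cardι]) none (Xvec c σ i0 t.1) hperp_t
                  (by rw [Xvec_none]; exact hc0)
                · intro r
                  rw [hu, dotv_sub_right, hperp_t r, hperp_x₁ r, sub_zero]
                · rw [hu]
                  show Xvec c σ i0 t.1 none - Xvec c σ i0 x₁ none = 0
                  rw [Xvec_none, Xvec_none, sub_self]
              have hcoord := congrFun huzero (some ⟨j₀, hj₀⟩)
              rw [hu] at hcoord
              have hcoord2 : c j₀ * (t.1 : ZMod p) ^ σ j₀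
                  = c j₀ * (x₁ : ZMod p) ^ σ j₀ := by
                have : Xvec c σ i0 t.1 (some ⟨j₀, hj₀⟩)
                    - Xvec c σ i0 x₁ (some ⟨j₀, hj₀⟩) = 0 := hcoord
                have h5 : Xvec c σ i0 t.1 (some ⟨j₀, hj₀⟩)
                    = c j₀ * (t.1 : ZMod p) ^ σ j₀ := rfl
                have h6 : Xvec c σ i0 x₁ (some ⟨j₀, hj₀⟩)
                    = c j₀ * (x₁ : ZMod p) ^ σ j₀ := rfl
                rw [h5, h6] at this
                linear_combination this
              have hval : (t.1 : ZMod p) ^ σ j₀ = (x₁ : ZMod p) ^ σ j₀ :=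
                mul_left_cancel₀ hcj₀ hcoord2
              apply Units.ext
              rw [Units.val_pow_eq_pow_val, Units.val_pow_eq_pow_val]
              exact hval
            calc (SN.filter fun t => t.2 = zv).card
                ≤ (univ.filter fun x : (ZMod p)ˣ => x ^ σ j₀ = x₁ ^ σ j₀).card := by
                  apply Finset.card_le_card_of_injOn (fun t => t.1)
                  · intro t ht
                    simp only [Finset.mem_coe, Finset.mem_filter, Finset.mem_univ, true_and]
                    exact hpin t ht
                  · rintro ⟨a, av⟩ ha ⟨b, bv⟩ hb hab
                    rw [Finset.mem_coe] at ha hb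
                    have hav : av = zv := (Finset.mem_filter.1 ha).2
                    have hbv : bv = zv := (Finset.mem_filter.1 hb).2
                    simp only at hab
                    rw [Prod.mk.injEq]
                    exact ⟨hab, hav.trans hbv.symm⟩
              _ ≤ Nat.gcd (σ j₀) (p-1) := card_pow_fiber_le _ _
              _ ≤ E := hgcd j₀ hj₀
        calc (∑ zv ∈ (univ : Finset (Fin s → (ZMod p)ˣ)),
              (SN.filter fun t => t.2 = zv).card)
            ≤ (univ : Finset (Fin s → (ZMod p)ˣ)).card * E := by
              rw [← smul_eq_mul]
              exact Finset.sum_le_card_nsmul _ _ _ (fun zv _ => hfib zv)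
          _ = (p-1)^s * E := by
              rw [Finset.card_univ]
              congr 1
              rw [Fintype.card_fun]
              congr 1
              · exact ZMod.card_units p
              · exact Fintype.card_fin s
      -- degenerate decomposition
      have hDEG : (S.filter (fun t => ¬ LinearIndependent (ZMod p) (rowFam c σ i0 t.2))).card
          ≤ ∑ r0 : Fin s,
            (S.filter (fun t => vvec c σ i0 (t.2 r0) ∈ Wsp c σ i0 t.2 r0)).card := by
        refine le_trans (Finset.card_le_card ?_) (Finset.card_biUnion_le)
        intro t ht
        have ht' := Finset.mem_filter.1 ht
        obtain ⟨i, hi⟩ := exists_mem_span_of_not_li _ ht'.2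
        have hi0 : i ≠ 0 := by
          intro h
          rw [h] at hi
          have himgemp : (rowFam c σ i0 t.2 '' {j | j < (0 : Fin (s+1))}) = ∅ := by
            ext w
            simp only [Set.mem_image, Set.mem_setOf_eq, Set.mem_empty_iff_false, iff_false]
            rintro ⟨j, hj, -⟩
            exact absurd hj (Fin.not_lt_zero j)
          rw [himgemp, Submodule.span_empty, Submodule.mem_bot] at hi
          have : rowFam c σ i0 t.2 0 = vvec c σ i0 1 := Fin.cons_zero _ _
          rw [this] at hi
          exact vvec_ne_zero c σ i0 1 hi
        obtain ⟨r0, rfl⟩ := Fin.eq_succ_of_ne_zero hi0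
        rw [Finset.mem_biUnion]
        refine ⟨r0, Finset.mem_univ _, ?_⟩
        rw [Finset.mem_filter]
        refine ⟨ht'.1, ?_⟩
        have himg : rowFam c σ i0 t.2 '' {j | j < r0.succ}
            = Set.range (fun i : Fin (r0.1+1) =>
                rowFam c σ i0 t.2 (Fin.castLE (Nat.succ_le_succ r0.2.le) i)) := by
          ext w
          constructor
          · rintro ⟨j, hj, rfl⟩
            have hjv : j.1 < r0.1 + 1 := by
              have h7 := Fin.lt_iff_val_lt_val.1 hj
              simpa [Fin.val_succ] using h7
            refine ⟨⟨j.1, hjv⟩, ?_⟩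
            show rowFam c σ i0 t.2 (Fin.castLE (Nat.succ_le_succ r0.2.le) ⟨j.1, hjv⟩)
              = rowFam c σ i0 t.2 j
            have h8 : (Fin.castLE (Nat.succ_le_succ r0.2.le) ⟨j.1, hjv⟩ : Fin (s+1)) = j :=
              Fin.ext rfl
            rw [h8]
          · rintro ⟨i', rfl⟩
            refine ⟨Fin.castLE (Nat.succ_le_succ r0.2.le) i', ?_, rfl⟩
            simp only [Set.mem_setOf_eq]
            rw [Fin.lt_iff_val_lt_val]
            show i'.1 < r0.1 + 1
            exact i'.2
        rw [himg] at hi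
        have hrow : rowFam c σ i0 t.2 r0.succ = vvec c σ i0 (t.2 r0) := Fin.cons_succ _ _ _
        rw [hrow] at hi
        exact hi
      -- choice of subinstances
      have hchoice : ∀ t : (ZMod p)ˣ × (Fin s → (ZMod p)ˣ), t ∈ S → ∀ r0 : Fin s,
          ∃ c' : ι₀ → ZMod p, c' i0 ≠ 0 ∧ (suppc i0 c').card ≤ s ∧
            suppc i0 c' ⊆ suppc i0 c ∧ σ i0 = 0 ∧
            ∀ z, vvec c σ i0 z ∈ Wsp c σ i0 t.2 r0 → z ∈ rootsOf c' σ := by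
        intro t ht r0
        have htm := (hmemS t).1 ht
        exact exists_subinst c σ i0 hσ0 hc0 hcard' t.1 t.2 htm.1 htm.2 r0
      set EI : ((ZMod p)ˣ × (Fin s → (ZMod p)ˣ)) → Fin s → (ι₀ → ZMod p) :=
        fun t r0 => if h : t ∈ S then Classical.choose (hchoice t h r0) else c with hEI
      have hEIspec : ∀ t (h : t ∈ S) (r0 : Fin s),
          (EI t r0) i0 ≠ 0 ∧ (suppc i0 (EI t r0)).card ≤ s ∧
            suppc i0 (EI t r0) ⊆ suppc i0 c ∧ σ i0 = 0 ∧
            ∀ z, vvec c σ i0 z ∈ Wsp c σ i0 t.2 r0 → z ∈ rootsOf (EI t r0) σ := by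
        intro t h r0
        have : EI t r0 = Classical.choose (hchoice t h r0) := by
          rw [hEI]
          simp only [dif_pos h]
        rw [this]
        exact Classical.choose_spec (hchoice t h r0)
      -- W is determined by the prefix
      have hWupdate : ∀ (zv : Fin s → (ZMod p)ˣ) (r0 : Fin s),
          Wsp c σ i0 (Function.update zv r0 1) r0 = Wsp c σ i0 zv r0 := by
        intro zv r0
        have hfun : (fun i' : Fin (r0.1+1) =>
            rowFam c σ i0 (Function.update zv r0 1) (Fin.castLE (Nat.succ_le_succ r0.2.le) i'))
            = (fun i' : Fin (r0.1+1) =>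
            rowFam c σ i0 zv (Fin.castLE (Nat.succ_le_succ r0.2.le) i')) := by
          funext i'
          rcases Fin.eq_zero_or_eq_succ (Fin.castLE (Nat.succ_le_succ r0.2.le) i') with h | ⟨r', hr'⟩
          · rw [h]
            rw [show rowFam c σ i0 (Function.update zv r0 1) 0 = vvec c σ i0 1 from Fin.cons_zero _ _,
              show rowFam c σ i0 zv 0 = vvec c σ i0 1 from Fin.cons_zero _ _]
          · rw [hr']
            have hne : r' ≠ r0 := by
              intro hrr
              have hv1 : (Fin.castLE (Nat.succ_le_succ r0.2.le) i').1 = i'.1 := rfl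
              have hv2 : (Fin.succ r').1 = r'.1 + 1 := rfl
              have hv3 : i'.1 = r'.1 + 1 := by rw [← hv1, hr', hv2]
              have hv4 : i'.1 < r0.1 + 1 := i'.2
              rw [hrr] at hv3
              omega
            rw [show rowFam c σ i0 (Function.update zv r0 1) r'.succ
                = vvec c σ i0 (Function.update zv r0 1 r') from Fin.cons_succ _ _ _,
              show rowFam c σ i0 zv r'.succ = vvec c σ i0 (zv r') from Fin.cons_succ _ _ _,
              Function.update_of_ne hne]
        unfold Wsp
        rw [hfun]
      set M : Fin s → ℕ := fun r0 => S.sup (fun y => (rootsOf (EI y r0) σ).card) with hM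
      -- per-r0 bound
      have hSr : ∀ r0 : Fin s,
          (S.filter (fun t => vvec c σ i0 (t.2 r0) ∈ Wsp c σ i0 t.2 r0)).card
            ≤ Q ^ s * M r0 := by
        intro r0
        set Sr := S.filter (fun t => vvec c σ i0 (t.2 r0) ∈ Wsp c σ i0 t.2 r0) with hSrdef
        set T := S.filter (fun t => t.2 r0 = 1) with hT
        have hmaps : ∀ t ∈ Sr, (t.1, Function.update t.2 r0 1) ∈ T := by
          intro t ht
          have htS : t ∈ S := (Finset.mem_filter.1 ht).1
          have htm := (hmemS t).1 htS
          rw [hT, Finset.mem_filter]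
          constructor
          · rw [hmemS]
            refine ⟨htm.1, ?_⟩
            intro r
            show t.1 * Function.update t.2 r0 1 r ∈ U
            by_cases hr : r = r0
            · have h8 : Function.update t.2 r0 1 r = 1 := by
                rw [hr]; exact Function.update_self _ _ _
              rw [h8, mul_one]
              exact htm.1
            · rw [Function.update_of_ne hr]
              exact htm.2 r
          · exact Function.update_self _ _ _
        have hfibb : ∀ y ∈ T,
            (Sr.filter fun t => (t.1, Function.update t.2 r0 1) = y).card ≤ M r0 := by
          intro y hy
          have hyS : y ∈ S := (Finset.mem_filter.1 hy).1
          have hspec := hEIspec y hyS r0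
          calc (Sr.filter fun t => (t.1, Function.update t.2 r0 1) = y).card
              ≤ (rootsOf (EI y r0) σ).card := by
                apply Finset.card_le_card_of_injOn (fun t => t.2 r0)
                · intro t ht
                  have ht1 := Finset.mem_filter.1 ht
                  have htSr := ht1.1
                  have hteq := ht1.2
                  have htW : vvec c σ i0 (t.2 r0) ∈ Wsp c σ i0 t.2 r0 :=
                    (Finset.mem_filter.1 htSr).2
                  have hy2 : y.2 = Function.update t.2 r0 1 := by
                    rw [← hteq]
                  have hWeq : Wsp c σ i0 y.2 r0 = Wsp c σ i0 t.2 r0 := by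
                    rw [hy2, hWupdate]
                  apply hspec.2.2.2.2
                  rw [hWeq]
                  exact htW
                · rintro ⟨a, av⟩ ha ⟨b, bv⟩ hb hab
                  rw [Finset.mem_coe] at ha hb
                  have ha2 := (Finset.mem_filter.1 ha).2
                  have hb2 := (Finset.mem_filter.1 hb).2
                  have hab2 : (a, Function.update av r0 1) = (b, Function.update bv r0 1) := by
                    rw [ha2, hb2]
                  have hfst : a = b := congrArg Prod.fst hab2
                  have hsnd : Function.update av r0 1 = Function.update bv r0 1 :=
                    congrArg Prod.snd hab2
                  simp only at hab
                  rw [Prod.mk.injEq]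
                  refine ⟨hfst, ?_⟩
                  funext r
                  by_cases hr : r = r0
                  · rw [hr]; exact hab
                  · have := congrFun hsnd r
                    rwa [Function.update_of_ne hr, Function.update_of_ne hr] at this
            _ ≤ M r0 := by
                rw [hM]
                exact Finset.le_sup (f := fun y => (rootsOf (EI y r0) σ).card) hyS
        have hTcard : T.card ≤ Q ^ s := by
          have hpicard : (Fintype.piFinset fun _ : Fin s => U).card = Q ^ s := by
            rw [Fintype.card_piFinset]
            simp only [Finset.prod_const, Finset.card_univ, Fintype.card_fin]
            rw [← hQdef]
          rw [← hpicard]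
          apply Finset.card_le_card_of_injOn
            (fun t => fun r => if r = r0 then t.1 else t.1 * t.2 r)
          · intro t ht
            have htS : t ∈ S := (Finset.mem_filter.1 ht).1
            have htm := (hmemS t).1 htS
            simp only [Finset.mem_coe, Fintype.mem_piFinset]
            intro r
            by_cases hr : r = r0
            · rw [if_pos hr]; exact htm.1
            · rw [if_neg hr]; exact htm.2 r
          · rintro ⟨a, av⟩ ha ⟨b, bv⟩ hb hab
            rw [Finset.mem_coe] at ha hb
            have ha2 := (Finset.mem_filter.1 ha).2
            have hb2 := (Finset.mem_filter.1 hb).2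
            have hfst : a = b := by
              have := congrFun hab r0
              simpa using this
            rw [Prod.mk.injEq]
            refine ⟨hfst, ?_⟩
            funext r
            by_cases hr : r = r0
            · rw [hr]
              show av r0 = bv r0
              exact ha2.trans hb2.symm
            · have h9 := congrFun hab r
              simp only [if_neg hr] at h9
              rw [hfst] at h9
              exact mul_left_cancel h9
        calc Sr.card
            = ∑ y ∈ T, (Sr.filter fun t => (t.1, Function.update t.2 r0 1) = y).card :=
              Finset.card_eq_sum_card_fiberwise hmaps
          _ ≤ ∑ _y ∈ T, M r0 := Finset.sum_le_sum hfibb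
          _ = T.card * M r0 := by rw [Finset.sum_const, smul_eq_mul]
          _ ≤ Q ^ s * M r0 := Nat.mul_le_mul_right _ hTcard
      -- M bounds
      have hMbound : ∀ r0 : Fin s, (M r0) ^ s ≤ Bc s * E * (p-1)^(s-1) := by
        intro r0
        rcases S.eq_empty_or_nonempty with he | hne
        · have : M r0 = 0 := by rw [hM, he]; rfl
          rw [this]
          have hs : 0 < s := r0.pos
          rw [Nat.zero_pow (by omega)]
          exact Nat.zero_le _
        · obtain ⟨y₀, hy₀, hy₀eq⟩ := Finset.exists_mem_eq_sup S hne
            (fun y => (rootsOf (EI y r0) σ).card)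
          have hspec := hEIspec y₀ hy₀ r0
          have : M r0 = (rootsOf (EI y₀ r0) σ).card := by rw [hM]; exact hy₀eq
          rw [this]
          exact ih (EI y₀ r0) σ i0 hσ0 hspec.1
            (fun j hj => hgcd j (hspec.2.2.1 hj)) hspec.2.1
      have hMn : ∀ r0 : Fin s, M r0 ≤ p - 1 := by
        intro r0
        rw [hM]
        apply Finset.sup_le
        intro y _
        exact rootsOf_card_le _ _
      -- main inequality
      have hmain : Q ^ (s+1) ≤ (p-1)^s * E + Q^s * (∑ r0 : Fin s, M r0) := by
        calc Q ^ (s+1) ≤ S.card := hSlow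
          _ = (S.filter (fun t => LinearIndependent (ZMod p) (rowFam c σ i0 t.2))).card
              + (S.filter (fun t => ¬ LinearIndependent (ZMod p) (rowFam c σ i0 t.2))).card :=
            hsplit.symm
          _ ≤ (p-1)^s * E + ∑ r0 : Fin s,
              (S.filter (fun t => vvec c σ i0 (t.2 r0) ∈ Wsp c σ i0 t.2 r0)).card :=
            Nat.add_le_add hND hDEG
          _ ≤ (p-1)^s * E + ∑ r0 : Fin s, Q ^ s * M r0 :=
            Nat.add_le_add_left (Finset.sum_le_sum (fun r0 _ => hSr r0)) _
          _ = (p-1)^s * E + Q^s * (∑ r0 : Fin s, M r0) := by rw [Finset.mul_sum]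
      -- case analysis
      rcases le_or_gt (Q^(s+1)) (2 * ((p-1)^s * E)) with hA | hB
      · calc Q^(s+1) ≤ 2 * ((p-1)^s * E) := hA
          _ ≤ Bc (s+1) * E * (p-1)^((s+1)-1) := by
              simp only [Nat.add_sub_cancel]
              have h2 : 2 ≤ Bc (s+1) := two_le_Bc _
              calc 2 * ((p-1)^s * E) = 2 * E * (p-1)^s := by ring
                _ ≤ Bc (s+1) * E * (p-1)^s :=
                  Nat.mul_le_mul_right _ (Nat.mul_le_mul_right _ h2)
      · have hB2 : Q^(s+1) ≤ 2 * (Q^s * (∑ r0 : Fin s, M r0)) := by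
          have h8 := hmain
          omega
        rcases Nat.eq_zero_or_pos Q with hQ0 | hQpos
        · rw [hQ0]
          rw [Nat.zero_pow (by omega)]
          exact Nat.zero_le _
        · have hcancel : Q ≤ 2 * (∑ r0 : Fin s, M r0) := by
            have h9 : Q^s * Q ≤ Q^s * (2 * ∑ r0 : Fin s, M r0) := by
              calc Q^s * Q = Q^(s+1) := by ring
                _ ≤ 2 * (Q^s * ∑ r0 : Fin s, M r0) := hB2
                _ = Q^s * (2 * ∑ r0 : Fin s, M r0) := by ring
            exact Nat.le_of_mul_le_mul_left h9 (Nat.pow_pos hQpos)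
          rcases Nat.eq_zero_or_pos s with rfl | hs
          · simp only [Finset.univ_eq_empty, Finset.sum_empty] at hcancel
            omega
          · obtain ⟨r0s, _, hr0s⟩ := Finset.exists_mem_eq_sup
              (univ : Finset (Fin s)) (by
                refine Finset.univ_nonempty_iff.2 ?_
                exact Fin.pos_iff_nonempty.1 hs) M
            have hsum : (∑ r0 : Fin s, M r0) ≤ s * M r0s := by
              calc (∑ r0 : Fin s, M r0) ≤ (univ : Finset (Fin s)).card * M r0s := by
                    rw [← smul_eq_mul]
                    apply Finset.sum_le_card_nsmul
                    intro r0 _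
                    rw [← hr0s]
                    exact Finset.le_sup (Finset.mem_univ r0)
                _ = s * M r0s := by rw [Finset.card_univ, Fintype.card_fin]
            have hQle : Q ≤ 2 * s * M r0s := by
              calc Q ≤ 2 * (∑ r0 : Fin s, M r0) := hcancel
                _ ≤ 2 * (s * M r0s) := Nat.mul_le_mul_left _ hsum
                _ = 2 * s * M r0s := by ring
            calc Q^(s+1) ≤ (2*s*M r0s)^(s+1) := Nat.pow_le_pow_left hQle _
              _ = (2*s)^(s+1) * (M r0s)^(s+1) := by rw [mul_pow]
              _ = (2*s)^(s+1) * ((M r0s)^s * M r0s) := by ring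
              _ ≤ (2*s)^(s+1) * ((Bc s * E * (p-1)^(s-1)) * (p-1)) :=
                  Nat.mul_le_mul_left _ (Nat.mul_le_mul (hMbound r0s) (hMn r0s))
              _ = ((2*s)^(s+1) * Bc s) * E * ((p-1)^(s-1) * (p-1)) := by ring
              _ = ((2*s)^(s+1) * Bc s) * E * (p-1)^s := by
                  congr 1
                  rw [← pow_succ]
                  congr 1
                  omega
              _ ≤ Bc (s+1) * E * (p-1)^((s+1)-1) := by
                  simp only [Nat.add_sub_cancel]
                  apply Nat.mul_le_mul_right
                  apply Nat.mul_le_mul_right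
                  show (2*s)^(s+1) * Bc s ≤ (2*(s+1))^(s+1) * Bc s + 2
                  have h10 : (2*s)^(s+1) ≤ (2*(s+1))^(s+1) :=
                    Nat.pow_le_pow_left (by omega) _
                  have := Nat.mul_le_mul_right (Bc s) h10
                  omega

end Rec


section Top

variable {p : ℕ} [hp : Fact p.Prime] {k : ℕ}

lemma upow_mod (x : (ZMod p)ˣ) (m : ℕ) : x ^ m = x ^ (m % (p-1)) := by
  conv_lhs => rw [← Nat.div_add_mod m (p-1)]
  rw [pow_add, pow_mul, pow_pm1, one_pow, one_mul]

lemma coe_pow_mod (x : (ZMod p)ˣ) (m : ℕ) :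
    ((x : ZMod p))^m = ((x : ZMod p))^(m % (p-1)) := by
  calc ((x : ZMod p))^m = ((x^m : (ZMod p)ˣ) : ZMod p) := by
        rw [Units.val_pow_eq_pow_val]
    _ = ((x^(m % (p-1)) : (ZMod p)ˣ) : ZMod p) := by rw [upow_mod]
    _ = ((x : ZMod p))^(m % (p-1)) := by rw [Units.val_pow_eq_pow_val]

lemma gcd_shift (n a b : ℕ) (hn : 0 < n) (hb : b ≤ n) :
    Nat.gcd ((a + (n - b)) % n) n = Int.gcd ((a:ℤ) - b) n := by
  rcases le_or_gt b a with h | h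
  · have h1 : (a + (n - b)) % n = (a - b) % n := by
      have h2 : a + (n - b) = (a - b) + n := by omega
      rw [h2, Nat.add_mod_right]
    rw [h1]
    have h3 : (a:ℤ) - b = ((a - b : ℕ) : ℤ) := by push_cast; omega
    rw [h3, Int.gcd_natCast_natCast]
    calc Nat.gcd ((a-b) % n) n = Nat.gcd n (a-b) := (Nat.gcd_rec n (a-b)).symm
      _ = Nat.gcd (a-b) n := Nat.gcd_comm _ _
  · have h1 : a + (n - b) < n := by omega
    rw [Nat.mod_eq_of_lt h1]
    have h3 : (a:ℤ) - b = -(((b - a : ℕ)) : ℤ) := by push_cast; omega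
    rw [h3, Int.neg_gcd, Int.gcd_natCast_natCast]
    have h4 : a + (n - b) = n - (b - a) := by omega
    rw [h4]
    apply Nat.dvd_antisymm
    · apply Nat.dvd_gcd
      · have d1 := Nat.gcd_dvd_left (n - (b-a)) n
        have d2 := Nat.gcd_dvd_right (n - (b-a)) n
        have d3 : Nat.gcd (n - (b-a)) n ∣ n - (n - (b - a)) := Nat.dvd_sub d2 d1
        have h5 : n - (n - (b - a)) = b - a := by omega
        rwa [h5] at d3
      · exact Nat.gcd_dvd_right _ _
    · apply Nat.dvd_gcd
      · have d1 := Nat.gcd_dvd_left (b-a) n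
        have d2 := Nat.gcd_dvd_right (b-a) n
        exact Nat.dvd_sub d2 d1
      · exact Nat.gcd_dvd_right _ _

lemma coeff_sum_eq (a : Fin (k+1) → ZMod p) (t : Fin (k+1) → ℕ) (htm : StrictMono t)
    (j : Fin (k+1)) : (∑ i, C (a i) * X ^ t i).coeff (t j) = a j := by
  rw [Polynomial.finset_sum_coeff]
  rw [Finset.sum_eq_single j]
  · rw [Polynomial.coeff_C_mul, Polynomial.coeff_X_pow, if_pos rfl, mul_one]
  · intro b _ hb
    rw [Polynomial.coeff_C_mul, Polynomial.coeff_X_pow,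
      if_neg (fun h => hb (htm.injective h.symm)), mul_zero]
  · intro h; exact absurd (Finset.mem_univ j) h

lemma natDegree_sum_eq (a : Fin (k+1) → ZMod p) (t : Fin (k+1) → ℕ) (htm : StrictMono t)
    (hak : a (Fin.last k) ≠ 0) :
    (∑ i, C (a i) * X ^ t i).natDegree = t (Fin.last k) := by
  apply le_antisymm
  · apply Polynomial.natDegree_sum_le_of_forall_le
    intro i _
    calc (C (a i) * X ^ t i).natDegree ≤ t i := Polynomial.natDegree_C_mul_X_pow_le _ _
      _ ≤ t (Fin.last k) := htm.monotone (Fin.le_last i)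
  · apply Polynomial.le_natDegree_of_ne_zero
    rw [coeff_sum_eq a t htm]
    exact hak

noncomputable def theta (q : Polynomial (ZMod p)) : Polynomial (ZMod p) := X * Polynomial.derivative q

lemma theta_sum (b : Fin (k+1) → ZMod p) (t : Fin (k+1) → ℕ) :
    theta (∑ i, C (b i) * X ^ t i) = ∑ i, C (b i * (t i : ZMod p)) * X ^ t i := by
  unfold theta
  rw [Polynomial.derivative_sum, Finset.mul_sum]
  apply Finset.sum_congr rfl
  intro i _
  rw [Polynomial.derivative_C_mul_X_pow]
  rcases Nat.eq_zero_or_pos (t i) with h | h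
  · rw [h]
    push_cast
    simp
  · have h2 : (X : Polynomial (ZMod p)) * (C (b i * (t i : ZMod p)) * X ^ (t i - 1))
        = C (b i * (t i : ZMod p)) * (X ^ (t i - 1) * X) := by ring
    rw [h2, ← pow_succ]
    congr 2
    omega

lemma theta_iter (a : Fin (k+1) → ZMod p) (t : Fin (k+1) → ℕ) :
    ∀ s : ℕ, theta^[s] (∑ i, C (a i) * X ^ t i)
      = ∑ i, C (a i * (t i : ZMod p)^s) * X ^ t i := by
  intro s
  induction s with
  | zero =>
    simp only [Function.iterate_zero, id_eq]
    apply Finset.sum_congr rfl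
    intro i _
    rw [pow_zero, mul_one]
  | succ s ih =>
    rw [Function.iterate_succ_apply', ih, theta_sum]
    apply Finset.sum_congr rfl
    intro i _
    rw [mul_assoc, ← pow_succ]

lemma tlast_cast_ne (t : Fin (k+1) → ℕ) (i : Fin (k+1)) (hi : 1 ≤ t i) (hip : t i < p) :
    (t i : ZMod p) ≠ 0 := by
  intro h
  rw [ZMod.natCast_eq_zero_iff] at h
  have := Nat.le_of_dvd (by omega) h
  omega

lemma theta_iter_ne_zero (a : Fin (k+1) → ZMod p) (t : Fin (k+1) → ℕ) (htm : StrictMono t)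
    (hak : a (Fin.last k) ≠ 0) (hk : 1 ≤ k) (htl : t (Fin.last k) < p) (s : ℕ) :
    theta^[s] (∑ i, C (a i) * X ^ t i) ≠ 0 := by
  rw [theta_iter]
  intro h
  have h1 := coeff_sum_eq (fun i => a i * (t i : ZMod p)^s) t htm (Fin.last k)
  rw [h] at h1
  simp only [Polynomial.coeff_zero] at h1
  have htl1 : 1 ≤ t (Fin.last k) := by
    have h0 : (0 : Fin (k+1)) < Fin.last k := by
      rw [Fin.lt_iff_val_lt_val]
      simp [Fin.last]
      omega
    have := htm h0
    omega
  have h2 : ((t (Fin.last k) : ZMod p)) ≠ 0 := tlast_cast_ne t _ htl1 htl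
  exact hak (by
    have h3 : a (Fin.last k) * (t (Fin.last k) : ZMod p)^s = 0 := h1.symm
    rcases mul_eq_zero.1 h3 with h4 | h4
    · exact h4
    · exact absurd h4 (pow_ne_zero _ h2))

lemma rm_theta_iter (a : Fin (k+1) → ZMod p) (t : Fin (k+1) → ℕ) (htm : StrictMono t)
    (hak : a (Fin.last k) ≠ 0) (hk : 1 ≤ k) (htl : t (Fin.last k) < p)
    (x : ZMod p) (hx : x ≠ 0) (s : ℕ) :
    (∑ i, C (a i) * X ^ t i).rootMultiplicity x - s
      ≤ (theta^[s] (∑ i, C (a i) * X ^ t i)).rootMultiplicity x := by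
  induction s with
  | zero => simp
  | succ s ih =>
    have hne : theta^[s+1] (∑ i, C (a i) * X ^ t i) ≠ 0 :=
      theta_iter_ne_zero a t htm hak hk htl (s+1)
    rw [Function.iterate_succ_apply'] at hne ⊢
    have hder : Polynomial.derivative (theta^[s] (∑ i, C (a i) * X ^ t i)) ≠ 0 := by
      intro h
      apply hne
      show (X : Polynomial (ZMod p)) * Polynomial.derivative (theta^[s] (∑ i, C (a i) * X ^ t i)) = 0
      rw [h, mul_zero]
    have h1 : (theta (theta^[s] (∑ i, C (a i) * X ^ t i))).rootMultiplicity x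
        = (Polynomial.derivative (theta^[s] (∑ i, C (a i) * X ^ t i))).rootMultiplicity x := by
      show Polynomial.rootMultiplicity x
          ((X : Polynomial (ZMod p)) * Polynomial.derivative (theta^[s] (∑ i, C (a i) * X ^ t i)))
        = _
      rw [Polynomial.rootMultiplicity_mul (mul_ne_zero Polynomial.X_ne_zero hder)]
      rw [Polynomial.rootMultiplicity_eq_zero (by simp [Polynomial.IsRoot, hx]), zero_add]
    rw [h1]
    have h2 := Polynomial.rootMultiplicity_sub_one_le_derivative_rootMultiplicity_of_ne_zero
      (theta^[s] (∑ i, C (a i) * X ^ t i)) x hder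
    omega

lemma moments (a : Fin (k+1) → ZMod p) (t : Fin (k+1) → ℕ) (htm : StrictMono t)
    (hak : a (Fin.last k) ≠ 0) (hk : 1 ≤ k) (htl : t (Fin.last k) < p)
    (x : ZMod p) (hx : x ≠ 0) (s r : ℕ) (hs : s < r)
    (hr : r ≤ (∑ i, C (a i) * X ^ t i).rootMultiplicity x) :
    ∑ i, a i * (t i : ZMod p)^s * x ^ t i = 0 := by
  have h1 := rm_theta_iter a t htm hak hk htl x hx s
  have h2 : 0 < (theta^[s] (∑ i, C (a i) * X ^ t i)).rootMultiplicity x := by omega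
  have h3 : (theta^[s] (∑ i, C (a i) * X ^ t i)).IsRoot x :=
    (Polynomial.rootMultiplicity_pos (theta_iter_ne_zero a t htm hak hk htl s)).1 h2
  rw [theta_iter] at h3
  have h4 : Polynomial.eval x (∑ i, C (a i * (t i : ZMod p)^s) * X ^ t i)
      = ∑ i, a i * (t i : ZMod p)^s * x ^ t i := by
    rw [Polynomial.eval_finset_sum]
    apply Finset.sum_congr rfl
    intro i _
    rw [Polynomial.eval_mul, Polynomial.eval_C, Polynomial.eval_pow, Polynomial.eval_X]
  rw [← h4]
  exact h3

lemma moments_elim (a : Fin (k+1) → ZMod p) (t : Fin (k+1) → ℕ) (htm : StrictMono t)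
    (hak : a (Fin.last k) ≠ 0) (hk : 1 ≤ k) (htl : t (Fin.last k) < p)
    (x : ZMod p) (hx : x ≠ 0) (r : ℕ) (hr1 : 1 ≤ r)
    (hr : r ≤ (∑ i, C (a i) * X ^ t i).rootMultiplicity x)
    (R : Polynomial (ZMod p)) (hdeg : R.natDegree ≤ r - 1) :
    ∑ i, a i * R.eval ((t i : ZMod p)) * x ^ t i = 0 := by
  have key : ∀ i : Fin (k+1), a i * R.eval ((t i : ZMod p)) * x ^ t i
      = ∑ s ∈ Finset.range (R.natDegree + 1),
          R.coeff s * (a i * (t i : ZMod p)^s * x ^ t i) := by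
    intro i
    rw [Polynomial.eval_eq_sum_range, Finset.mul_sum, Finset.sum_mul]
    apply Finset.sum_congr rfl
    intro s _
    ring
  rw [Finset.sum_congr rfl (fun i _ => key i), Finset.sum_comm]
  apply Finset.sum_eq_zero
  intro s hs
  rw [← Finset.mul_sum]
  rw [moments a t htm hak hk htl x hx s r (by
    rw [Finset.mem_range] at hs
    omega) hr, mul_zero]

noncomputable def Rpoly (t : Fin (k+1) → ℕ) (J : Finset (Fin (k+1))) : Polynomial (ZMod p) :=
  ∏ j ∈ J, (1 - C ((t j : ZMod p)⁻¹) * X)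

lemma Rpoly_natDegree_le (t : Fin (k+1) → ℕ) (J : Finset (Fin (k+1))) :
    (Rpoly (p := p) t J).natDegree ≤ J.card := by
  unfold Rpoly
  calc (∏ j ∈ J, (1 - C ((t j : ZMod p)⁻¹) * X)).natDegree
      ≤ ∑ j ∈ J, (1 - C ((t j : ZMod p)⁻¹) * X).natDegree :=
        Polynomial.natDegree_prod_le _ _
    _ ≤ ∑ _j ∈ J, 1 := by
        apply Finset.sum_le_sum
        intro j _
        calc (1 - C ((t j : ZMod p)⁻¹) * X).natDegree
            ≤ max (1 : Polynomial (ZMod p)).natDegree ((C ((t j : ZMod p)⁻¹) * X).natDegree) :=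
              Polynomial.natDegree_sub_le _ _
          _ ≤ 1 := by
              apply max_le
              · simp
              · calc (C ((t j : ZMod p)⁻¹) * X).natDegree
                    ≤ (C ((t j : ZMod p)⁻¹)).natDegree + (X : Polynomial (ZMod p)).natDegree :=
                      Polynomial.natDegree_mul_le
                  _ ≤ 1 := by simp
    _ = J.card := by rw [Finset.sum_const, smul_eq_mul, mul_one]

lemma Rpoly_eval_zero (t : Fin (k+1) → ℕ) (J : Finset (Fin (k+1))) :
    (Rpoly (p := p) t J).eval 0 = 1 := by
  unfold Rpoly
  rw [Polynomial.eval_prod]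
  apply Finset.prod_eq_one
  intro j _
  simp

lemma Rpoly_eval_mem (t : Fin (k+1) → ℕ) (J : Finset (Fin (k+1))) (j : Fin (k+1)) (hj : j ∈ J)
    (hne : (t j : ZMod p) ≠ 0) : (Rpoly (p := p) t J).eval ((t j : ZMod p)) = 0 := by
  unfold Rpoly
  rw [Polynomial.eval_prod]
  apply Finset.prod_eq_zero hj
  rw [Polynomial.eval_sub, Polynomial.eval_one, Polynomial.eval_mul, Polynomial.eval_C,
    Polynomial.eval_X, inv_mul_cancel₀ hne, sub_self]

lemma Rpoly_eval_not_mem (t : Fin (k+1) → ℕ) (htm : StrictMono t) (htl : t (Fin.last k) < p)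
    (J : Finset (Fin (k+1))) (i : Fin (k+1)) (hi : i ∉ J) :
    (Rpoly (p := p) t J).eval ((t i : ZMod p)) ≠ 0 := by
  unfold Rpoly
  rw [Polynomial.eval_prod]
  apply Finset.prod_ne_zero_iff.2
  intro j hj
  rw [Polynomial.eval_sub, Polynomial.eval_one, Polynomial.eval_mul, Polynomial.eval_C,
    Polynomial.eval_X]
  intro h
  have h2 : (t j : ZMod p)⁻¹ * (t i : ZMod p) = 1 := (sub_eq_zero.1 h).symm
  have htjne : (t j : ZMod p) ≠ 0 := by
    intro h3
    rw [h3] at h2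
    simp at h2
  have h4 : (t i : ZMod p) = (t j : ZMod p) := by
    field_simp at h2
    exact h2
  have h5 : t i % p = t j % p := by
    have := (ZMod.natCast_eq_natCast_iff' (t i) (t j) p).1 h4
    exact this
  have hti : t i < p := lt_of_le_of_lt (htm.monotone (Fin.le_last i)) htl
  have htj : t j < p := lt_of_le_of_lt (htm.monotone (Fin.le_last j)) htl
  rw [Nat.mod_eq_of_lt hti, Nat.mod_eq_of_lt htj] at h5
  exact hi (htm.injective h5 ▸ hj)

theorem main_nat (a : Fin (k+1) → ZMod p) (ha : ∀ i, a i ≠ 0)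
    (t : Fin (k+1) → ℕ) (ht0 : t 0 = 0) (htm : StrictMono t) (htl : t (Fin.last k) < p)
    (hk : 1 ≤ k)
    (hsp : Splits (∑ i, C (a i) * X ^ t i))
    (i₁ : Fin (k+1)) (D : ℕ) (hD1 : 1 ≤ D)
    (hDub : ∀ j, j ≠ i₁ → Int.gcd ((t j : ℤ) - (t i₁ : ℤ)) ((p:ℤ) - 1) ≤ D) :
    (t (Fin.last k))^k ≤ k^k * Bc k * D * (p-1)^(k-1) := by
  classical
  have hp2 : 2 ≤ p := hp.out.two_le
  have hn0 : 0 < p - 1 := by omega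
  set F : Polynomial (ZMod p) := ∑ i, C (a i) * X ^ t i with hF
  have hFne : F ≠ 0 := by
    intro h
    have h1 := coeff_sum_eq a t htm (Fin.last k)
    rw [← hF, h] at h1
    simp only [Polynomial.coeff_zero] at h1
    exact ha _ h1.symm
  have hdeg : F.natDegree = t (Fin.last k) := natDegree_sum_eq a t htm (ha _)
  have hcard : Multiset.card F.roots = t (Fin.last k) := by
    rw [← hdeg]
    exact Polynomial.splits_iff_card_roots.1 hsp
  have hti_lt : ∀ i, t i < p := fun i => lt_of_le_of_lt (htm.monotone (Fin.le_last i)) htl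
  have hti_le : ∀ i, t i ≤ p - 1 := fun i => by have := hti_lt i; omega
  have htpos : ∀ i : Fin (k+1), i ≠ 0 → 1 ≤ t i := by
    intro i hi
    have h0 : (0 : Fin (k+1)) < i := Fin.pos_of_ne_zero hi
    have := htm h0
    omega
  have hcast_ne : ∀ i : Fin (k+1), i ≠ 0 → ((t i : ZMod p)) ≠ 0 :=
    fun i hi => tlast_cast_ne t i (htpos i hi) (hti_lt i)
  have hev0 : Polynomial.eval 0 F = a 0 := by
    rw [hF, Polynomial.eval_finset_sum]
    rw [Finset.sum_eq_single (0 : Fin (k+1))]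
    · rw [Polynomial.eval_mul, Polynomial.eval_C, Polynomial.eval_pow, Polynomial.eval_X,
        ht0, pow_zero, mul_one]
    · intro b _ hb
      rw [Polynomial.eval_mul, Polynomial.eval_C, Polynomial.eval_pow, Polynomial.eval_X,
        zero_pow (by have := htpos b hb; omega), mul_zero]
    · intro h; exact absurd (Finset.mem_univ _) h
  have hx0 : ∀ x ∈ F.roots, x ≠ 0 := by
    intro x hx h0
    rw [h0] at hx
    have := (Polynomial.mem_roots hFne).1 hx
    rw [Polynomial.IsRoot, hev0] at this
    exact ha 0 this
  -- multiplicity ≤ k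
  have hmk : ∀ x : ZMod p, x ≠ 0 → F.rootMultiplicity x ≤ k := by
    intro x hx
    by_contra hgt
    push_neg at hgt
    have hme := moments_elim a t htm (ha _) hk htl x hx (k+1) (by omega) (by rw [← hF]; omega)
      (Rpoly t (Finset.univ.erase 0))
      (by
        have h1 := Rpoly_natDegree_le (p := p) t (Finset.univ.erase 0)
        have h2 : (Finset.univ.erase (0 : Fin (k+1))).card = k := by
          rw [Finset.card_erase_of_mem (Finset.mem_univ _), Finset.card_univ, Fintype.card_fin]
          omega
        omega)
    rw [Finset.sum_eq_single (0 : Fin (k+1))] at hme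
    · rw [ht0] at hme
      rw [show ((0:ℕ) : ZMod p) = (0 : ZMod p) from Nat.cast_zero] at hme
      rw [Rpoly_eval_zero, pow_zero, mul_one, mul_one] at hme
      exact ha 0 hme
    · intro b _ hb
      rw [Rpoly_eval_mem t _ b (Finset.mem_erase.2 ⟨hb, Finset.mem_univ _⟩) (hcast_ne b hb),
        mul_zero, zero_mul]
    · intro h; exact absurd (Finset.mem_univ _) h
  -- exponents
  set σf : Fin (k+1) → ℕ := fun i => (t i + ((p-1) - t i₁)) % (p-1) with hσf
  have hσi₁ : σf i₁ = 0 := by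
    simp only [hσf]
    rw [show t i₁ + ((p-1) - t i₁) = p - 1 by have := hti_le i₁; omega, Nat.mod_self]
  have hgcdb : ∀ j, j ≠ i₁ → Nat.gcd (σf j) (p-1) ≤ D := by
    intro j hj
    have h1 := gcd_shift (p-1) (t j) (t i₁) hn0 (hti_le i₁)
    simp only [hσf]
    rw [h1]
    have h2 : (((p:ℕ) - 1 : ℕ) : ℤ) = (p : ℤ) - 1 := by
      push_cast [Nat.cast_sub (by omega : 1 ≤ p)]
      ring
    rw [h2]
    exact hDub j hj
  -- the per-r bound
  have hNr : ∀ r, 1 ≤ r → r ≤ k →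
      ∃ Q : ℕ, (F.roots.toFinset.filter (fun x => r ≤ F.rootMultiplicity x)).card ≤ Q ∧
        Q^k ≤ Bc k * D * (p-1)^(k-1) := by
    intro r hr1 hrk
    -- choose J
    have hA : r - 1 ≤ (((Finset.univ.erase (0 : Fin (k+1)))).erase i₁).card := by
      have h1 : (Finset.univ.erase (0 : Fin (k+1))).card = k := by
        rw [Finset.card_erase_of_mem (Finset.mem_univ _), Finset.card_univ, Fintype.card_fin]
        omega
      have h2 := Finset.pred_card_le_card_erase
        (s := Finset.univ.erase (0 : Fin (k+1))) (a := i₁)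
      omega
    obtain ⟨J, hJsub, hJcard⟩ := Finset.exists_subset_card_eq hA
    have hJ0 : (0 : Fin (k+1)) ∉ J := by
      intro h
      have := hJsub h
      rw [Finset.mem_erase, Finset.mem_erase] at this
      exact this.2.1 rfl
    have hJi₁ : i₁ ∉ J := by
      intro h
      have := hJsub h
      rw [Finset.mem_erase] at this
      exact this.1 rfl
    set cJ : Fin (k+1) → ZMod p := fun i => a i * (Rpoly t J).eval ((t i : ZMod p)) with hcJ
    have hcJi₁ : cJ i₁ ≠ 0 := by
      simp only [hcJ]
      exact mul_ne_zero (ha i₁) (Rpoly_eval_not_mem t htm htl J i₁ hJi₁)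
    have hsupp : suppc i₁ cJ ⊆ Finset.univ.erase i₁ := by
      intro j hj
      simp only [suppc, Finset.mem_filter] at hj
      exact Finset.mem_erase.2 ⟨hj.2.1, Finset.mem_univ _⟩
    have hsuppcard : (suppc i₁ cJ).card ≤ k := by
      calc (suppc i₁ cJ).card ≤ (Finset.univ.erase i₁).card := Finset.card_le_card hsupp
        _ = k := by
          rw [Finset.card_erase_of_mem (Finset.mem_univ _), Finset.card_univ, Fintype.card_fin]
          omega
    have hrec := rec_bound (p := p) (ι₀ := Fin (k+1)) D hD1 k cJ σf i₁ hσi₁ hcJi₁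
      (fun j hj => by
        have hjne : j ≠ i₁ := by
          simp only [suppc, Finset.mem_filter] at hj
          exact hj.2.1
        exact hgcdb j hjne) hsuppcard
    refine ⟨(rootsOf cJ σf).card, ?_, hrec⟩
    -- injection
    apply Finset.card_le_card_of_injOn
      (fun x => if h : x = 0 then 1 else Units.mk0 x h)
    · intro x hxmem
      have hx1 := Finset.mem_filter.1 hxmem
      have hxr : x ∈ F.roots := Multiset.mem_toFinset.1 hx1.1
      have hxne : x ≠ 0 := hx0 x hxr
      simp only [Finset.mem_coe, dif_neg hxne]
      have hrm : r ≤ F.rootMultiplicity x := hx1.2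
      have hme := moments_elim a t htm (ha _) hk htl x hxne r hr1 hrm (Rpoly t J)
        (by
          have := Rpoly_natDegree_le (p := p) t J
          omega)
      rw [mem_rootsOf]
      have hval : ((Units.mk0 x hxne : (ZMod p)ˣ) : ZMod p) = x := rfl
      rw [hval]
      have hterm : ∀ i : Fin (k+1), cJ i * x ^ σf i
          = (a i * (Rpoly t J).eval ((t i : ZMod p)) * x ^ t i) * x ^ ((p-1) - t i₁) := by
        intro i
        have hcp : x ^ ((t i + ((p-1) - t i₁)) % (p-1)) = x ^ (t i + ((p-1) - t i₁)) := by
          have h5 := coe_pow_mod (Units.mk0 x hxne) (t i + ((p-1) - t i₁))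
          rw [hval] at h5
          exact h5.symm
        simp only [hcJ, hσf]
        rw [hcp, pow_add]
        ring
      rw [Finset.sum_congr rfl (fun i _ => hterm i), ← Finset.sum_mul, hme, zero_mul]
    · intro x hxm y hym hxy
      have hxne : x ≠ 0 := hx0 x (Multiset.mem_toFinset.1 (Finset.mem_filter.1 hxm).1)
      have hyne : y ≠ 0 := hx0 y (Multiset.mem_toFinset.1 (Finset.mem_filter.1 hym).1)
      simp only at hxy
      rw [dif_neg hxne, dif_neg hyne] at hxy
      have := congrArg (fun u : (ZMod p)ˣ => (u : ZMod p)) hxy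
      exact this
  -- sum over multiplicities
  have hsum1 : ∑ x ∈ F.roots.toFinset, F.rootMultiplicity x = t (Fin.last k) := by
    rw [← hcard, ← Multiset.toFinset_sum_count_eq]
    apply Finset.sum_congr rfl
    intro x _
    rw [Polynomial.count_roots]
  have hswap : ∑ x ∈ F.roots.toFinset, F.rootMultiplicity x
      = ∑ r ∈ Finset.Icc 1 k,
          (F.roots.toFinset.filter (fun x => r ≤ F.rootMultiplicity x)).card := by
    have hstep : ∀ x ∈ F.roots.toFinset,
        F.rootMultiplicity x = ((Finset.Icc 1 k).filter (fun r => r ≤ F.rootMultiplicity x)).card := by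
      intro x hxm
      have hxne : x ≠ 0 := hx0 x (Multiset.mem_toFinset.1 hxm)
      have hle : F.rootMultiplicity x ≤ k := hmk x hxne
      have : (Finset.Icc 1 k).filter (fun r => r ≤ F.rootMultiplicity x)
          = Finset.Icc 1 (F.rootMultiplicity x) := by
        ext r
        simp only [Finset.mem_filter, Finset.mem_Icc]
        omega
      rw [this, Nat.card_Icc]
      omega
    rw [Finset.sum_congr rfl hstep]
    have h1 : ∀ x ∈ F.roots.toFinset,
        ((Finset.Icc 1 k).filter (fun r => r ≤ F.rootMultiplicity x)).card
          = ∑ r ∈ Finset.Icc 1 k, if r ≤ F.rootMultiplicity x then 1 else 0 := by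
      intro x _
      rw [Finset.card_filter]
    rw [Finset.sum_congr rfl h1, Finset.sum_comm]
    apply Finset.sum_congr rfl
    intro r _
    rw [Finset.card_filter]
  -- assemble
  have hQf : ∀ r ∈ Finset.Icc 1 k,
      ∃ Q : ℕ, (F.roots.toFinset.filter (fun x => r ≤ F.rootMultiplicity x)).card ≤ Q ∧
        Q^k ≤ Bc k * D * (p-1)^(k-1) := by
    intro r hr
    rw [Finset.mem_Icc] at hr
    exact hNr r hr.1 hr.2
  set Qf : ℕ → ℕ := fun r => if h : r ∈ Finset.Icc 1 k then Classical.choose (hQf r h) else 0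
    with hQfdef
  have hQfspec : ∀ r (h : r ∈ Finset.Icc 1 k),
      (F.roots.toFinset.filter (fun x => r ≤ F.rootMultiplicity x)).card ≤ Qf r ∧
        (Qf r)^k ≤ Bc k * D * (p-1)^(k-1) := by
    intro r h
    have : Qf r = Classical.choose (hQf r h) := by rw [hQfdef]; simp only [dif_pos h]
    rw [this]
    exact Classical.choose_spec (hQf r h)
  have hIccne : (Finset.Icc 1 k).Nonempty := ⟨1, Finset.mem_Icc.2 ⟨le_refl _, hk⟩⟩
  obtain ⟨rs, hrs, hrseq⟩ := Finset.exists_mem_eq_sup (Finset.Icc 1 k) hIccne Qf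
  have htle : t (Fin.last k) ≤ k * Qf rs := by
    calc t (Fin.last k) = ∑ x ∈ F.roots.toFinset, F.rootMultiplicity x := hsum1.symm
      _ = ∑ r ∈ Finset.Icc 1 k,
            (F.roots.toFinset.filter (fun x => r ≤ F.rootMultiplicity x)).card := hswap
      _ ≤ ∑ r ∈ Finset.Icc 1 k, Qf r :=
          Finset.sum_le_sum (fun r hr => (hQfspec r hr).1)
      _ ≤ (Finset.Icc 1 k).card * Qf rs := by
          rw [← smul_eq_mul]
          apply Finset.sum_le_card_nsmul
          intro r hr
          rw [← hrseq]
          exact Finset.le_sup hr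
      _ = k * Qf rs := by rw [Nat.card_Icc]; congr 1
  calc (t (Fin.last k))^k ≤ (k * Qf rs)^k := Nat.pow_le_pow_left htle _
    _ = k^k * (Qf rs)^k := by rw [mul_pow]
    _ ≤ k^k * (Bc k * D * (p-1)^(k-1)) := Nat.mul_le_mul_left _ ((hQfspec rs hrs).2)
    _ = k^k * Bc k * D * (p-1)^(k-1) := by ring

end Top

end CFK

open Polynomial


/-- For fixed `k ≥ 1` there is a constant `c = c(k) > 0` such that whenever a
lacunary polynomial `a_0 + a_1 X^{t_1} + ⋯ + a_k X^{t_k}` over `F_p` (with all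
`a_i ∈ F_p^*` and `0 = t_0 < t_1 < ⋯ < t_k < p`) splits completely over `F_p`,
the quantity `D = min_i max_{j ≠ i} gcd(t_j - t_i, p-1)` satisfies
`D ≥ c · t_k^k · p^{-(k-1)}`. -/
theorem D_lower_bound_of_splits (k : ℕ) (hk : 1 ≤ k) :
    ∃ c : ℝ, 0 < c ∧
      ∀ (p : ℕ) [Fact p.Prime],
        ∀ (a : Fin (k + 1) → ZMod p), (∀ i, a i ≠ 0) →
          ∀ (t : Fin (k + 1) → ℕ), t 0 = 0 → StrictMono t → t (Fin.last k) < p →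
            Splits (∑ i : Fin (k + 1), C (a i) * X ^ t i) →
              c * (t (Fin.last k) : ℝ) ^ k * (p : ℝ) ^ (-((k : ℝ) - 1)) ≤
                ((Finset.univ.inf' Finset.univ_nonempty fun i : Fin (k + 1) =>
                  (Finset.univ.erase i).sup fun j : Fin (k + 1) =>
                    Int.gcd ((t j : ℤ) - (t i : ℤ)) ((p : ℤ) - 1) : ℕ) : ℝ) := by
  classical
  have hkR : (0:ℝ) < (k:ℝ) := by exact_mod_cast hk
  have hBpos : (0:ℝ) < (CFK.Bc k : ℝ) := by
    have := CFK.two_le_Bc k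
    exact_mod_cast (by omega : 0 < CFK.Bc k)
  refine ⟨((k:ℝ)^k * (CFK.Bc k : ℝ))⁻¹, ?_, ?_⟩
  · exact inv_pos.2 (mul_pos (pow_pos hkR k) hBpos)
  · intro p hp a ha t ht0 htm htl hsp
    have hp2 : 2 ≤ p := hp.out.two_le
    set D : ℕ := (Finset.univ.inf' Finset.univ_nonempty fun i : Fin (k + 1) =>
      (Finset.univ.erase i).sup fun j : Fin (k + 1) =>
        Int.gcd ((t j : ℤ) - (t i : ℤ)) ((p : ℤ) - 1)) with hD
    obtain ⟨i₁, hi₁mem, hinf⟩ := Finset.exists_mem_eq_inf' (Finset.univ_nonempty)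
      (fun i : Fin (k + 1) => (Finset.univ.erase i).sup fun j : Fin (k + 1) =>
        Int.gcd ((t j : ℤ) - (t i : ℤ)) ((p : ℤ) - 1))
    have hDub : ∀ j, j ≠ i₁ → Int.gcd ((t j : ℤ) - (t i₁ : ℤ)) ((p:ℤ) - 1) ≤ D := by
      intro j hj
      rw [hD, hinf]
      exact Finset.le_sup (f := fun j : Fin (k+1) =>
        Int.gcd ((t j : ℤ) - (t i₁ : ℤ)) ((p:ℤ) - 1))
        (Finset.mem_erase.2 ⟨hj, Finset.mem_univ j⟩)
    have hD1 : 1 ≤ D := by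
      have hex : ∃ j : Fin (k+1), j ≠ i₁ := by
        by_cases h : i₁ = 0
        · refine ⟨Fin.last k, ?_⟩
          rw [h]
          intro hc
          have := congrArg Fin.val hc
          simp only [Fin.last, Fin.val_zero] at this
          omega
        · exact ⟨0, fun hc => h hc.symm⟩
      obtain ⟨j, hj⟩ := hex
      have h1 : 1 ≤ Int.gcd ((t j : ℤ) - (t i₁ : ℤ)) ((p:ℤ) - 1) := by
        rcases Nat.eq_zero_or_pos (Int.gcd ((t j : ℤ) - (t i₁ : ℤ)) ((p:ℤ) - 1)) with h0 | h0
        · exfalso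
          have h2 := Int.gcd_eq_zero_iff.1 h0
          have h3 : (p:ℤ) - 1 = 0 := h2.2
          have : (p:ℤ) = 1 := by omega
          have : p = 1 := by exact_mod_cast this
          omega
        · exact h0
      exact le_trans h1 (hDub j hj)
    have hnat := CFK.main_nat a ha t ht0 htm htl hk hsp i₁ D hD1 hDub
    -- pass to the reals
    have hppos : (0:ℝ) < (p:ℝ) := by
      have : 0 < p := by omega
      exact_mod_cast this
    have hcastk : -((k : ℝ) - 1) = -(((k - 1 : ℕ) : ℝ)) := by
      have : ((k - 1 : ℕ) : ℝ) = (k : ℝ) - 1 := by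
        have := Nat.cast_sub (R := ℝ) hk
        simpa using this
      rw [this]
    rw [hcastk, Real.rpow_neg (le_of_lt hppos), Real.rpow_natCast]
    have hnatR : ((t (Fin.last k) : ℝ))^k
        ≤ (k:ℝ)^k * (CFK.Bc k : ℝ) * (D:ℝ) * ((p:ℝ))^(k-1) := by
      have h1 : (((t (Fin.last k))^k : ℕ) : ℝ)
          ≤ ((k^k * CFK.Bc k * D * (p-1)^(k-1) : ℕ) : ℝ) := by
        exact_mod_cast hnat
      have h2 : (((t (Fin.last k))^k : ℕ) : ℝ) = ((t (Fin.last k) : ℝ))^k := by push_cast; ring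
      have h3 : ((k^k * CFK.Bc k * D * (p-1)^(k-1) : ℕ) : ℝ)
          = (k:ℝ)^k * (CFK.Bc k : ℝ) * (D:ℝ) * (((p-1 : ℕ)):ℝ)^(k-1) := by push_cast; ring
      rw [h2, h3] at h1
      refine le_trans h1 ?_
      have h4 : (((p-1 : ℕ)):ℝ)^(k-1) ≤ ((p:ℝ))^(k-1) := by
        apply pow_le_pow_left₀ (by positivity)
        exact_mod_cast Nat.sub_le p 1
      have h5 : (0:ℝ) ≤ (k:ℝ)^k * (CFK.Bc k : ℝ) * (D:ℝ) := by positivity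
      calc (k:ℝ)^k * (CFK.Bc k : ℝ) * (D:ℝ) * (((p-1 : ℕ)):ℝ)^(k-1)
          ≤ (k:ℝ)^k * (CFK.Bc k : ℝ) * (D:ℝ) * ((p:ℝ))^(k-1) :=
            mul_le_mul_of_nonneg_left h4 h5
        _ = _ := rfl
    have hden : (0:ℝ) < (k:ℝ)^k * (CFK.Bc k : ℝ) * ((p:ℝ))^(k-1) := by positivity
    have heq : ((k:ℝ)^k * (CFK.Bc k : ℝ))⁻¹ * ((t (Fin.last k) : ℝ))^k * (((p:ℝ))^(k-1))⁻¹
        = ((t (Fin.last k) : ℝ))^k / ((k:ℝ)^k * (CFK.Bc k : ℝ) * ((p:ℝ))^(k-1)) := by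
      rw [div_eq_mul_inv, mul_inv]
      ring
    rw [heq, div_le_iff₀ hden]
    calc ((t (Fin.last k) : ℝ))^k ≤ (k:ℝ)^k * (CFK.Bc k : ℝ) * (D:ℝ) * ((p:ℝ))^(k-1) := hnatR
      _ = (D:ℝ) * ((k:ℝ)^k * (CFK.Bc k : ℝ) * ((p:ℝ))^(k-1)) := by ring
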